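/- Let A be symmetric positive definite with diagonal blocks A₁, …, A_k of sizes n₁, …, n_k (∑nᵢ = n). Then the block diagonal matrix B̄ = blkdiag(A₁^{-1/2}, …, A_k^{-1/2}) minimizes ω(BᵀAB) over all block diagonal matrices B with blocks of the given sizes. -/

import Mathlib

open Matrix Finset

section Aux

lemma my_det_blockDiagonal' {k : ℕ} {sz : Fin k → ℕ}
    (M : ∀ i : Fin k, Matrix (Fin (sz i)) (Fin (sz i)) ℝ) :
    (blockDiagonal' M).det = ∏ i, (M i).det := by
  rw [(blockTriangular_blockDiagonal' M).det_fintype]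
  refine Finset.prod_congr rfl fun i _ => ?_
  let e : Fin (sz i) ≃ {a : (j : Fin k) × Fin (sz j) // a.fst = i} :=
    { toFun := fun x => ⟨⟨i, x⟩, rfl⟩
      invFun := fun p => Fin.cast (congrArg sz p.2) p.1.2
      left_inv := fun x => rfl
      right_inv := by rintro ⟨⟨j, b⟩, h⟩; subst h; rfl }
  rw [← det_submatrix_equiv_self e.symm (M i)]
  congr 1
  ext ⟨⟨j, b⟩, h⟩ ⟨⟨j', b'⟩, h'⟩
  dsimp at h h'
  subst h; subst h'
  simp [toSquareBlock_def, e, Fin.cast]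

lemma my_entry {k : ℕ} {sz : Fin k → ℕ}
    (A : Matrix ((i : Fin k) × Fin (sz i)) ((i : Fin k) × Fin (sz i)) ℝ)
    (C : ∀ i : Fin k, Matrix (Fin (sz i)) (Fin (sz i)) ℝ) (i : Fin k) (a a' : Fin (sz i)) :
    ((blockDiagonal' C)ᵀ * A * blockDiagonal' C) ⟨i, a⟩ ⟨i, a'⟩ =
      ((C i)ᵀ * (Matrix.of fun a b => A ⟨i, a⟩ ⟨i, b⟩) * (C i)) a a' := by
  have hAD : ∀ b : Fin (sz i),
      (A * blockDiagonal' C) ⟨i, b⟩ ⟨i, a'⟩ = ∑ c, A ⟨i, b⟩ ⟨i, c⟩ * C i c a' := by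
    intro b
    rw [Matrix.mul_apply, ← Finset.univ_sigma_univ, Finset.sum_sigma]
    rw [Finset.sum_eq_single_of_mem i (Finset.mem_univ i)
      (fun j _ hj => Finset.sum_eq_zero fun c _ => by
        rw [blockDiagonal'_apply_ne _ _ _ hj, mul_zero])]
    simp
  rw [Matrix.mul_assoc, Matrix.mul_assoc, Matrix.mul_apply, ← Finset.univ_sigma_univ,
    Finset.sum_sigma]
  rw [Finset.sum_eq_single_of_mem i (Finset.mem_univ i)
    (fun j _ hj => Finset.sum_eq_zero fun b _ => by
      rw [transpose_apply, blockDiagonal'_apply_ne _ _ _ hj, zero_mul])]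
  rw [Matrix.mul_apply]
  refine Finset.sum_congr rfl fun b _ => ?_
  rw [hAD b, transpose_apply, transpose_apply, blockDiagonal'_apply_eq, Matrix.mul_apply]
  simp

lemma my_trace_conj {k : ℕ} {sz : Fin k → ℕ}
    (A : Matrix ((i : Fin k) × Fin (sz i)) ((i : Fin k) × Fin (sz i)) ℝ)
    (C : ∀ i : Fin k, Matrix (Fin (sz i)) (Fin (sz i)) ℝ) :
    ((blockDiagonal' C)ᵀ * A * blockDiagonal' C).trace =
      ∑ i, ((C i)ᵀ * (Matrix.of fun a b => A ⟨i, a⟩ ⟨i, b⟩) * (C i)).trace := by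
  rw [Matrix.trace, ← Finset.univ_sigma_univ, Finset.sum_sigma]
  exact Finset.sum_congr rfl fun i _ => Finset.sum_congr rfl fun a _ => my_entry A C i a a

lemma my_posDef_of_det {m : Type*} [Fintype m] [DecidableEq m]
    {M : Matrix m m ℝ} (h : M.PosSemidef) (hd : M.det ≠ 0) : M.PosDef := by
  refine posDef_iff_dotProduct_mulVec.mpr ⟨h.1, fun x hx => ?_⟩
  have hMx : M *ᵥ x ≠ 0 := by
    have : Function.Injective M.mulVec :=
      Matrix.mulVec_injective_iff_isUnit.mpr ((Matrix.isUnit_iff_isUnit_det M).mpr hd.isUnit)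
    intro h0
    exact hx (this (by simpa using h0))
  have h0 : star x ⬝ᵥ M *ᵥ x ≠ 0 := fun hc => hMx ((h.dotProduct_mulVec_zero_iff x).mp hc)
  have h1 : 0 ≤ star x ⬝ᵥ M *ᵥ x := by simpa using h.re_dotProduct_nonneg x
  exact lt_of_le_of_ne h1 (Ne.symm h0)

lemma my_amgm {m : Type*} [Fintype m] [DecidableEq m] {M : Matrix m m ℝ}
    (hM : M.PosDef) (hm : 0 < Fintype.card m) :
    M.det ^ ((1 : ℝ) / Fintype.card m) ≤ M.trace / Fintype.card m := by
  set n : ℕ := Fintype.card m with hn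
  have hev := hM.eigenvalues_pos
  have hdet : M.det = ∏ i, hM.1.eigenvalues i := by
    simpa [RCLike.ofReal_real_eq_id] using hM.1.det_eq_prod_eigenvalues
  have htr : M.trace = ∑ i, hM.1.eigenvalues i := by
    conv_lhs => rw [hM.1.spectral_theorem]
    rw [Unitary.conjStarAlgAut_apply, Matrix.trace_mul_cycle,
      Matrix.mem_unitaryGroup_iff'.mp hM.1.eigenvectorUnitary.2, Matrix.one_mul]
    simp [RCLike.ofReal_real_eq_id, Matrix.trace_diagonal]
  have hw : ∀ i ∈ Finset.univ (α := m), (0:ℝ) ≤ 1 / n := fun i _ => by positivity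
  have hw1 : ∑ _i : m, (1:ℝ)/n = 1 := by
    rw [Finset.sum_const, Finset.card_univ, ← hn, nsmul_eq_mul]
    field_simp
  have hz : ∀ i ∈ Finset.univ (α := m), (0:ℝ) ≤ hM.1.eigenvalues i := fun i _ => (hev i).le
  have hgm := Real.geom_mean_le_arith_mean_weighted Finset.univ _ _ hw hw1 hz
  calc M.det ^ ((1:ℝ)/n) = ∏ i, hM.1.eigenvalues i ^ ((1:ℝ)/n) := by
        rw [hdet, ← Real.finset_prod_rpow _ _ (fun i _ => (hev i).le)]
    _ ≤ ∑ i, (1:ℝ)/n * hM.1.eigenvalues i := hgm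
    _ = M.trace / n := by rw [htr, Finset.sum_div]; exact Finset.sum_congr rfl fun i _ => by ring

end Aux

/-- `ω`-optimal block diagonal preconditioner.  Let `A ≻ 0` with principal diagonal
blocks `Aᵢ` of sizes `nᵢ` (`∑ nᵢ = n`).  If each `Bᵢ` is `Aᵢ^{-1/2}` (characterized as
the positive definite matrix with `Bᵢ Aᵢ Bᵢ = I`), then `B̄ = blkdiag(B₁,…,B_k)`
minimizes `ω(CᵀAC)` over all block diagonal matrices `C` (with invertible blocks
of the given sizes). -/
theorem omega_optimal_block_diagonal_preconditioner (k : ℕ) (sz : Fin k → ℕ)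
    (A : Matrix ((i : Fin k) × Fin (sz i)) ((i : Fin k) × Fin (sz i)) ℝ)
    (hA : A.PosDef)
    (B : ∀ i : Fin k, Matrix (Fin (sz i)) (Fin (sz i)) ℝ)
    (hB : ∀ i, (B i).PosDef ∧
      B i * (Matrix.of fun a b => A ⟨i, a⟩ ⟨i, b⟩) * B i = 1) :
    let N : ℕ := Fintype.card ((i : Fin k) × Fin (sz i))
    let omega : Matrix ((i : Fin k) × Fin (sz i)) ((i : Fin k) × Fin (sz i)) ℝ → ℝ :=
      fun S => (S.trace / N) / S.det ^ ((1 : ℝ) / N)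
    ∀ C : ∀ i : Fin k, Matrix (Fin (sz i)) (Fin (sz i)) ℝ,
      (∀ i, IsUnit (C i).det) →
      omega ((Matrix.blockDiagonal' B)ᵀ * A * Matrix.blockDiagonal' B) ≤
        omega ((Matrix.blockDiagonal' C)ᵀ * A * Matrix.blockDiagonal' C) := by
  intro N omega C hC
  simp only [omega]
  rcases Nat.eq_zero_or_pos N with hN0 | hNpos
  · simp [hN0]
  -- notation
  set Ablk : ∀ i : Fin k, Matrix (Fin (sz i)) (Fin (sz i)) ℝ :=
    fun i => Matrix.of fun a b => A ⟨i, a⟩ ⟨i, b⟩ with hAblk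
  have hNR : (0:ℝ) < (N:ℝ) := by exact_mod_cast hNpos
  have hNne : (N:ℝ) ≠ 0 := hNR.ne'
  -- the diagonal blocks are positive definite
  have hdetB : ∀ i, 0 < (B i).det := fun i => (hB i).1.det_pos
  have hBAB : ∀ i, (B i).det * (Ablk i).det * (B i).det = 1 := by
    intro i
    have := congrArg Matrix.det (hB i).2
    rwa [det_mul, det_mul, det_one] at this
  have hdetAblk_ne : ∀ i, (Ablk i).det ≠ 0 := by
    intro i h0
    have := hBAB i
    rw [h0] at this
    simp at this
  have hAblk_psd : ∀ i, (Ablk i).PosSemidef := fun i =>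
    hA.posSemidef.submatrix (Sigma.mk i)
  have hAblk_pd : ∀ i, (Ablk i).PosDef := fun i =>
    my_posDef_of_det (hAblk_psd i) (hdetAblk_ne i)
  have hdetA : 0 < A.det := hA.det_pos
  -- transpose vs conjTranspose over ℝ
  have hct : ∀ {n : ℕ} (M : Matrix (Fin n) (Fin n) ℝ), Mᴴ = Mᵀ := by
    intro n M; ext a b; simp [conjTranspose_apply]
  -- the conjugated blocks are positive definite
  set S : ∀ i : Fin k, Matrix (Fin (sz i)) (Fin (sz i)) ℝ :=
    fun i => (C i)ᵀ * Ablk i * C i with hS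
  have hdetS : ∀ i, (S i).det = (C i).det ^ 2 * (Ablk i).det := by
    intro i; rw [hS]; simp only [det_mul, det_transpose]; ring
  have hSpd : ∀ i, (S i).PosDef := by
    intro i
    refine my_posDef_of_det ?_ ?_
    · have := (hAblk_psd i).conjTranspose_mul_mul_same (C i)
      rwa [hct (C i)] at this
    · rw [hdetS i]
      exact mul_ne_zero (pow_ne_zero 2 ((hC i).ne_zero ∘ fun h => h)) (hdetAblk_ne i)
  -- symmetric square roots
  have hBt : ∀ i, (B i)ᵀ = B i := fun i => by rw [← hct (B i)]; exact (hB i).1.1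
  have hNsum : N = ∑ i, sz i := by
    simp [N, Fintype.card_sigma]
  have hNsumR : (N:ℝ) = ∑ i, (sz i : ℝ) := by rw [hNsum]; push_cast; rfl
  -- trace and determinant computations
  have htrT : ((blockDiagonal' B)ᵀ * A * blockDiagonal' B).trace = (N:ℝ) := by
    rw [my_trace_conj]
    have h1 : ∀ i, ((B i)ᵀ * (Matrix.of fun a b => A ⟨i,a⟩ ⟨i,b⟩) * B i).trace = (sz i:ℝ) := by
      intro i
      rw [hBt i, (hB i).2, trace_one]
      simp
    rw [Finset.sum_congr rfl fun i _ => h1 i, hNsumR]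
  have hdetT : ((blockDiagonal' B)ᵀ * A * blockDiagonal' B).det
      = A.det * (∏ i, (B i).det)^2 := by
    rw [det_mul, det_mul, det_transpose, my_det_blockDiagonal']
    ring
  have hdetSfull : ((blockDiagonal' C)ᵀ * A * blockDiagonal' C).det
      = A.det * (∏ i, (C i).det)^2 := by
    rw [det_mul, det_mul, det_transpose, my_det_blockDiagonal']
    ring
  set pB : ℝ := ∏ i, (B i).det with hpB
  set pC : ℝ := ∏ i, (C i).det with hpC
  have hpBpos : 0 < pB := Finset.prod_pos fun i _ => hdetB i
  have hpCne : pC ≠ 0 := Finset.prod_ne_zero_iff.mpr fun i _ => (hC i).ne_zero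
  have hdetCne : ∀ i, (C i).det ≠ 0 := fun i => (hC i).ne_zero
  have hAi_eq : ∀ i, (Ablk i).det = ((B i).det ^ 2)⁻¹ := by
    intro i
    have h := hBAB i
    have h2 : (Ablk i).det * (B i).det ^ 2 = 1 := by ring_nf; ring_nf at h; linarith
    exact eq_inv_of_mul_eq_one_left h2
  have hprodS : ∏ i, (S i).det = pC ^ 2 * (pB ^ 2)⁻¹ := by
    calc ∏ i, (S i).det = ∏ i, ((C i).det ^ 2 * (Ablk i).det) :=
          Finset.prod_congr rfl fun i _ => hdetS i
      _ = (∏ i, (C i).det ^ 2) * ∏ i, (Ablk i).det := Finset.prod_mul_distrib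
      _ = pC ^ 2 * (pB ^ 2)⁻¹ := by
          rw [Finset.prod_pow, Finset.prod_congr rfl fun i _ => hAi_eq i, hpC]
          rw [Finset.prod_inv_distrib, Finset.prod_pow, hpB]
  have hdSpos : ∀ i, 0 < (S i).det := fun i => (hSpd i).det_pos
  -- the key AM-GM inequality over blocks
  have K : (∏ i, (S i).det) ^ ((1:ℝ)/N) ≤ (∑ i, (S i).trace) / N := by
    have hw : ∀ i ∈ Finset.univ (α := Fin k), (0:ℝ) ≤ (sz i : ℝ)/N := fun i _ => by positivity
    have hw1 : ∑ i, (sz i : ℝ)/N = 1 := by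
      rw [← Finset.sum_div, ← hNsumR, div_self hNne]
    have hz : ∀ i ∈ Finset.univ (α := Fin k),
        (0:ℝ) ≤ (S i).det ^ ((1:ℝ)/(sz i)) := fun i _ => Real.rpow_nonneg (hdSpos i).le _
    have hgm := Real.geom_mean_le_arith_mean_weighted Finset.univ
      (fun i => (sz i : ℝ)/N) (fun i => (S i).det ^ ((1:ℝ)/(sz i))) hw hw1 hz
    have hzw : ∀ i, ((S i).det ^ ((1:ℝ)/(sz i))) ^ ((sz i : ℝ)/N)
        = (S i).det ^ ((1:ℝ)/N) := by
      intro i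
      by_cases hsz : sz i = 0
      · haveI : IsEmpty (Fin (sz i)) := by rw [hsz]; infer_instance
        have hd1 : (S i).det = 1 := Matrix.det_isEmpty
        rw [hd1, Real.one_rpow, Real.one_rpow, Real.one_rpow]
      · rw [← Real.rpow_mul (hdSpos i).le]
        congr 1
        have hszne : (sz i : ℝ) ≠ 0 := Nat.cast_ne_zero.mpr hsz
        field_simp
    have hrhs : ∀ i, ((sz i : ℝ)/N) * ((S i).det ^ ((1:ℝ)/(sz i))) ≤ (S i).trace / N := by
      intro i
      by_cases hsz : sz i = 0
      · haveI : IsEmpty (Fin (sz i)) := by rw [hsz]; infer_instance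
        have htr0 : (S i).trace = 0 := by simp [Matrix.trace]
        simp [hsz, htr0]
      · have hcard : Fintype.card (Fin (sz i)) = sz i := Fintype.card_fin _
        have hamgm := my_amgm (hSpd i) (by rw [hcard]; exact Nat.pos_of_ne_zero hsz)
        rw [hcard] at hamgm
        have hszpos : (0:ℝ) < (sz i : ℝ) := by exact_mod_cast Nat.pos_of_ne_zero hsz
        calc ((sz i : ℝ)/N) * ((S i).det ^ ((1:ℝ)/(sz i)))
            ≤ ((sz i : ℝ)/N) * ((S i).trace / sz i) := by
              apply mul_le_mul_of_nonneg_left hamgm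
              positivity
          _ = (S i).trace / N := by field_simp
    calc (∏ i, (S i).det) ^ ((1:ℝ)/N)
        = ∏ i, (S i).det ^ ((1:ℝ)/N) := by
          rw [← Real.finset_prod_rpow _ _ (fun i _ => (hdSpos i).le)]
      _ = ∏ i, ((S i).det ^ ((1:ℝ)/(sz i))) ^ ((sz i : ℝ)/N) :=
          (Finset.prod_congr rfl fun i _ => (hzw i).symm).symm ▸ rfl
      _ ≤ ∑ i, ((sz i : ℝ)/N) * ((S i).det ^ ((1:ℝ)/(sz i))) := hgm
      _ ≤ ∑ i, (S i).trace / N := Finset.sum_le_sum fun i _ => hrhs i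
      _ = (∑ i, (S i).trace) / N := (Finset.sum_div _ _ _).symm
  -- finish
  have htrS : ((blockDiagonal' C)ᵀ * A * blockDiagonal' C).trace = ∑ i, (S i).trace :=
    my_trace_conj A C
  rw [htrT, hdetT, htrS, hdetSfull, div_self hNne]
  have hpBsq : (0:ℝ) < A.det * pB ^ 2 := mul_pos hdetA (pow_pos hpBpos 2)
  have hpCsqpos : (0:ℝ) < pC ^ 2 := lt_of_le_of_ne (sq_nonneg pC) (Ne.symm (pow_ne_zero 2 hpCne))
  have hpCsq : (0:ℝ) < A.det * pC ^ 2 := mul_pos hdetA hpCsqpos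
  have hdTpos : (0:ℝ) < (A.det * pB ^ 2) ^ ((1:ℝ)/N) := Real.rpow_pos_of_pos hpBsq _
  have hdSpos' : (0:ℝ) < (A.det * pC ^ 2) ^ ((1:ℝ)/N) := Real.rpow_pos_of_pos hpCsq _
  rw [div_le_div_iff₀ hdTpos hdSpos', one_mul]
  have key2 : (A.det * pC ^ 2) ^ ((1:ℝ)/N)
      = (∏ i, (S i).det) ^ ((1:ℝ)/N) * (A.det * pB ^ 2) ^ ((1:ℝ)/N) := by
    rw [← Real.mul_rpow (Finset.prod_nonneg fun i _ => (hdSpos i).le) hpBsq.le]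
    congr 1
    rw [hprodS]
    field_simp
  rw [key2]
  exact mul_le_mul_of_nonneg_right K hdTpos.le
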